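/- Let n be a positive integer, K a field of characteristic r with r = 0 or r ∤ n, containing a primitive n-th root of unity. Let 0 ≠ a ∈ K and let z be a root of X^n = a. If b ∈ K(z) satisfies b^n ∈ K, then b = c·z^k for some c ∈ K and 0 ≤ k < n. -/

import Mathlib

open Polynomial IntermediateField

set_option synthInstance.maxHeartbeats 800000 in
set_option maxHeartbeats 2000000 in
/-- (Kummer) Let `n` be a positive integer and `K` a field whose characteristic is `0` or
prime to `n`, containing a primitive `n`-th root of unity.  Let `0 ≠ a ∈ K` and let `z`
(in an extension `L`) be a root of `X^n = a`.  If `b ∈ K(z)` satisfies `b^n ∈ K`, then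
`b = c·z^k` for some `c ∈ K` and `0 ≤ k < n`. -/
theorem stmt11 {K L : Type*} [Field K] [Field L] [Algebra K L]
    (n : ℕ) (hn : 0 < n) (hchar : ¬ ringChar K ∣ n)
    (ζ : K) (hζ : IsPrimitiveRoot ζ n)
    (a : K) (ha : a ≠ 0) (z : L) (hz : z ^ n = algebraMap K L a)
    (b : L) (hb : b ∈ IntermediateField.adjoin K {z})
    (hbn : b ^ n ∈ (algebraMap K L).range) :
    ∃ (c : K) (k : ℕ), k < n ∧ b = algebraMap K L c * z ^ k := by
  haveI : NeZero n := ⟨hn.ne'⟩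
  rcases eq_or_ne b 0 with rfl | hb0
  · exact ⟨0, 0, hn, by simp⟩
  have hnK : (n : K) ≠ 0 := fun h => hchar ((CharP.cast_eq_zero_iff K (ringChar K) n).mp h)
  have hzint : IsIntegral K z :=
    ⟨X ^ n - C a, monic_X_pow_sub_C a hn.ne', by simp [hz]⟩
  set F := IntermediateField.adjoin K {z} with hF
  let g : F := IntermediateField.AdjoinSimple.gen K z
  have hgL : algebraMap F L g = z := rfl
  have hinj : Function.Injective (algebraMap F L) := (algebraMap F L).injective
  have hg : g ^ n = algebraMap K F a := by
    apply hinj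
    rw [map_pow, hgL, hz, ← IsScalarTower.algebraMap_apply]
  have hgne : g ≠ 0 := fun h => ha (by
    have := hg
    rw [h, zero_pow hn.ne'] at this
    exact (_root_.map_eq_zero (algebraMap K F)).mp this.symm)
  -- primitive root in F
  let ζF : F := algebraMap K F ζ
  have hζF : IsPrimitiveRoot ζF n := hζ.map_of_injective (algebraMap K F).injective
  -- descent of n-th roots of unity
  have hdesc : ∀ u : F, u ^ n = 1 → ∃ t : K, algebraMap K F t = u := by
    intro u hu
    obtain ⟨i, -, hi⟩ := hζF.eq_pow_of_pow_eq_one hu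
    exact ⟨ζ ^ i, by rw [map_pow]; exact hi⟩
  -- adjoin g = top
  have hadj : Algebra.adjoin K {g} = ⊤ := by
    apply Subalgebra.map_injective (f := F.val) Subtype.val_injective
    rw [AlgHom.map_adjoin, Algebra.map_top, F.range_val, Set.image_singleton]
    show Algebra.adjoin K {z} = F.toSubalgebra
    exact (IntermediateField.adjoin_simple_toSubalgebra_of_isAlgebraic hzint.isAlgebraic).symm
  -- splitting field
  haveI hsplit : IsSplittingField K F (X ^ n - C a) := by
    constructor
    · rw [Polynomial.map_sub, Polynomial.map_pow, Polynomial.map_X,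
        Polynomial.map_C, X_pow_sub_C_eq_prod hζF hn hg]
      exact Splits.prod fun i _ => Splits.X_sub_C _
    · rw [eq_top_iff, ← hadj]
      apply Algebra.adjoin_mono
      rintro x rfl
      rw [Polynomial.mem_rootSet]
      exact ⟨X_pow_sub_C_ne_zero hn a, by simp [map_pow, hg]⟩
  haveI : FiniteDimensional K F := IntermediateField.adjoin.finiteDimensional hzint
  haveI : IsGalois K F :=
    IsGalois.of_separable_splitting_field (p := X ^ n - C a)
      (Polynomial.separable_X_pow_sub_C a hnK ha)
  -- any automorphism fixing g is the identity
  have hfix : ∀ σ : F ≃ₐ[K] F, σ g = g → σ = 1 := by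
    intro σ hσ
    have h : ∀ x ∈ Algebra.adjoin K {g}, σ x = x := by
      intro x hx
      induction hx using Algebra.adjoin_induction with
      | mem y hy => rw [Set.mem_singleton_iff] at hy; rw [hy]; exact hσ
      | algebraMap r => exact σ.commutes r
      | add x y _ _ hx hy => rw [map_add, hx, hy]
      | mul x y _ _ hx hy => rw [map_mul, hx, hy]
    exact AlgEquiv.ext fun x =>
      (h x (hadj ▸ Algebra.mem_top)).trans (AlgEquiv.one_apply x).symm
  have hgpowne : g ^ n ≠ 0 := pow_ne_zero _ hgne
  have hcoc : ∀ σ : F ≃ₐ[K] F, (σ g / g) ^ n = 1 := by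
    intro σ
    rw [div_pow, ← map_pow, hg, AlgEquiv.commutes, ← hg, div_self hgpowne]
  -- the cocycle homomorphism into F
  have hmul : ∀ σ τ : F ≃ₐ[K] F, (σ * τ) g / g = (σ g / g) * (τ g / g) := by
    intro σ τ
    obtain ⟨t, ht⟩ := hdesc _ (hcoc τ)
    have h1 : τ g = algebraMap K F t * g := by rw [ht, div_mul_cancel₀ _ hgne]
    have h2 : (σ * τ) g = algebraMap K F t * σ g := by
      show σ (τ g) = _
      rw [h1, map_mul, AlgEquiv.commutes]
    rw [h2, ← ht]
    field_simp
  let χ : (F ≃ₐ[K] F) →* F :=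
    { toFun := fun σ => σ g / g
      map_one' := by simp [div_self hgne]
      map_mul' := hmul }
  have hχinj : Function.Injective χ := by
    rw [injective_iff_map_eq_one]
    intro σ hσ
    exact hfix σ (by rwa [show χ σ = σ g / g from rfl, div_eq_one_iff_eq hgne] at hσ)
  haveI : IsCyclic (F ≃ₐ[K] F) := isCyclic_of_subgroup_isDomain χ hχinj
  obtain ⟨σ₀, hσ₀⟩ := IsCyclic.exists_generator (α := F ≃ₐ[K] F)
  set m := Module.finrank K F with hm
  have hcard : Nat.card (F ≃ₐ[K] F) = m := by
    exact IsGalois.card_aut_eq_finrank K F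
  have horder : orderOf σ₀ = m :=
    (orderOf_eq_card_of_forall_mem_zpowers hσ₀).trans hcard
  obtain ⟨ζ', hζ'⟩ := hdesc _ (hcoc σ₀)
  have hσ₀g : σ₀ g = algebraMap K F ζ' * g := by rw [hζ', div_mul_cancel₀ _ hgne]
  have hpow : ∀ j : ℕ, (σ₀ ^ j) g = algebraMap K F (ζ' ^ j) * g := by
    intro j
    induction j with
    | zero => simp
    | succ j ih =>
      rw [pow_succ, AlgEquiv.mul_apply, hσ₀g, map_mul, AlgEquiv.commutes, ih, pow_succ, map_mul]
      ring
  have hfixiff : ∀ l : ℕ, ζ' ^ l = 1 ↔ m ∣ l := by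
    intro l
    constructor
    · intro hl
      rw [← horder]
      apply orderOf_dvd_of_pow_eq_one
      apply hfix
      rw [hpow, hl, map_one, one_mul]
    · intro hl
      have h1 : (σ₀ ^ l) g = g := by
        obtain ⟨j, rfl⟩ := hl
        rw [pow_mul, ← horder, pow_orderOf_eq_one, one_pow]; rfl
      rw [hpow] at h1
      have := mul_right_cancel₀ hgne (h1.trans (one_mul g).symm)
      exact (algebraMap K F).injective (by rw [this, map_one])
  have hm0 : 0 < m := Module.finrank_pos
  have hprim : IsPrimitiveRoot ζ' m :=
    ⟨(hfixiff m).mpr dvd_rfl, fun l hl => (hfixiff l).mp hl⟩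
  -- m ≤ n
  have hminpoly : minpoly K z ∣ X ^ n - C a := minpoly.dvd K z (by simp [hz])
  have hmn : m ≤ n := by
    rw [hm, IntermediateField.adjoin.finrank hzint]
    calc (minpoly K z).natDegree ≤ (X ^ n - C a).natDegree :=
          Polynomial.natDegree_le_of_dvd hminpoly (X_pow_sub_C_ne_zero hn a)
      _ = n := natDegree_X_pow_sub_C
  -- power basis
  let pb : PowerBasis K F := IntermediateField.adjoin.powerBasis hzint
  have hpbgen : pb.gen = g := rfl
  have hdim : pb.dim = m := by rw [hm, ← PowerBasis.finrank pb]
  -- b in F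
  let b' : F := ⟨b, hb⟩
  have hb'L : algebraMap F L b' = b := rfl
  have hb'ne : b' ≠ 0 := fun h => hb0 (by rw [← hb'L, h, map_zero])
  have hb'K : b' ^ n ∈ (algebraMap K F).range := by
    obtain ⟨t, ht⟩ := hbn
    refine ⟨t, hinj ?_⟩
    rw [← IsScalarTower.algebraMap_apply, ht, map_pow, hb'L]
  obtain ⟨s, hs⟩ := hb'K
  have hωcoc : (σ₀ b' / b') ^ n = 1 := by
    rw [div_pow, ← map_pow, ← hs, AlgEquiv.commutes, hs, div_self (pow_ne_zero _ hb'ne)]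
  obtain ⟨ω, hω⟩ := hdesc _ hωcoc
  have hσ₀b : σ₀ b' = algebraMap K F ω * b' := by rw [hω, div_mul_cancel₀ _ hb'ne]
  -- coordinates
  set c : Fin pb.dim → K := fun i => pb.basis.repr b' i with hc
  have hrepr : ∑ i : Fin pb.dim, c i • pb.gen ^ (i : ℕ) = b' := by
    conv_rhs => rw [← pb.basis.sum_repr b']
    simp [pb.coe_basis, hc]
  have key : ∀ i : Fin pb.dim, c i * ζ' ^ (i : ℕ) = ω * c i := by
    have h1 : ∑ i : Fin pb.dim, (c i * ζ' ^ (i : ℕ) - ω * c i) • pb.basis i = 0 := by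
      have e1 : σ₀ b' = ∑ i : Fin pb.dim, (c i * ζ' ^ (i : ℕ)) • pb.gen ^ (i : ℕ) := by
        rw [← hrepr, map_sum]
        refine Finset.sum_congr rfl fun i _ => ?_
        rw [map_smul, hpbgen, map_pow, hσ₀g, mul_pow, ← map_pow, ← Algebra.smul_def, smul_smul]
      have e2 : σ₀ b' = ∑ i : Fin pb.dim, (ω * c i) • pb.gen ^ (i : ℕ) := by
        rw [hσ₀b, ← hrepr, Finset.mul_sum]
        refine Finset.sum_congr rfl fun i _ => ?_
        rw [← Algebra.smul_def, smul_smul]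
      calc ∑ i : Fin pb.dim, (c i * ζ' ^ (i : ℕ) - ω * c i) • pb.basis i
          = ∑ i : Fin pb.dim, ((c i * ζ' ^ (i : ℕ)) • pb.gen ^ (i : ℕ)
              - (ω * c i) • pb.gen ^ (i : ℕ)) := by
            refine Finset.sum_congr rfl fun i _ => ?_
            rw [pb.coe_basis, sub_smul]
        _ = σ₀ b' - σ₀ b' := by rw [Finset.sum_sub_distrib, ← e1, ← e2]
        _ = 0 := sub_self _
    intro i
    exact sub_eq_zero.mp (Fintype.linearIndependent_iff.mp pb.basis.linearIndependent _ h1 i)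
  obtain ⟨i₀, hi₀⟩ : ∃ i, c i ≠ 0 := by
    by_contra h
    push_neg at h
    apply hb'ne
    rw [← hrepr]
    exact Finset.sum_eq_zero fun i _ => by rw [h i, zero_smul]
  have hωval : ω = ζ' ^ (i₀ : ℕ) :=
    (mul_left_cancel₀ hi₀ ((key i₀).trans (mul_comm ω (c i₀)))).symm
  have hzero : ∀ i : Fin pb.dim, i ≠ i₀ → c i = 0 := by
    intro i hi
    by_contra hci
    have heq : ζ' ^ (i : ℕ) * c i = ζ' ^ (i₀ : ℕ) * c i := by
      rw [mul_comm, key i, hωval]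
    exact hi (Fin.ext (hprim.pow_inj (hdim ▸ i.2) (hdim ▸ i₀.2)
      (mul_left_injective₀ hci heq)))
  have hfinal : b' = c i₀ • pb.gen ^ (i₀ : ℕ) := by
    rw [← hrepr]
    exact Finset.sum_eq_single i₀ (fun i _ hi => by rw [hzero i hi, zero_smul]) (by simp)
  refine ⟨c i₀, (i₀ : ℕ), lt_of_lt_of_le (hdim ▸ i₀.2) hmn, ?_⟩
  rw [← hb'L, hfinal, Algebra.smul_def, map_mul, ← IsScalarTower.algebraMap_apply,
    hpbgen, map_pow, hgL]
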